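/- (Lemma 4.4, existence of a separating projection direction in the plane) Let n ≥ 2 and let w_1, …, w_n ∈ ℝ² with d_min := min_{p≠j} ‖w_p − w_j‖₂. For q = 1, …, n(n+1)/2 let θ_q := 2πq/(n(n+1)) and let S_q be the one-dimensional subspace of ℝ² spanned by v(θ_q) := (cos θ_q, sin θ_q). Then there exists q* ∈ {1, …, n(n+1)/2} such that min_{p≠j, 1≤p,j≤n} ‖P_{S_{q*}}(w_p) − P_{S_{q*}}(w_j)‖₂ ≥ 2 d_min/(n(n+1)). -/

import Mathlib

/-- The unit vector `(cos θ, sin θ)` of the plane. -/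
noncomputable def dirVec (θ : ℝ) : EuclideanSpace ℝ (Fin 2) :=
  WithLp.toLp 2 fun (i : Fin 2) => if (i : ℕ) = 0 then Real.cos θ else Real.sin θ

lemma dirVec_norm (θ : ℝ) : ‖dirVec θ‖ = 1 := by
  rw [EuclideanSpace.norm_eq]
  simp [dirVec, Fin.sum_univ_two, Real.cos_sq_add_sin_sq]

lemma proj_diff (θ : ℝ) (x y : EuclideanSpace ℝ (Fin 2)) :
    ‖(Submodule.orthogonalProjection (Submodule.span ℝ {dirVec θ}) x : EuclideanSpace ℝ (Fin 2)) -
      (Submodule.orthogonalProjection (Submodule.span ℝ {dirVec θ}) y : EuclideanSpace ℝ (Fin 2))‖ =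
    |Real.cos θ * (x 0 - y 0) + Real.sin θ * (x 1 - y 1)| := by
  have hv := dirVec_norm θ
  rw [← Submodule.starProjection_apply, ← Submodule.starProjection_apply,
    Submodule.starProjection_unit_singleton ℝ hv, Submodule.starProjection_unit_singleton ℝ hv,
    ← sub_smul, norm_smul, hv, mul_one, ← inner_sub_right]
  rw [Real.norm_eq_abs]
  congr 1
  rw [PiLp.inner_apply, Fin.sum_univ_two]
  simp [dirVec]
  ring

/-- Polar representation of a nonzero planar vector. -/
lemma exists_angle (x : EuclideanSpace ℝ (Fin 2)) (hx : x ≠ 0) :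
    ∃ φ : ℝ, x 0 = ‖x‖ * Real.cos φ ∧ x 1 = ‖x‖ * Real.sin φ := by
  set z : ℂ := ⟨x 0, x 1⟩ with hz
  have hz0 : z ≠ 0 := by
    intro h
    apply hx
    have h0 : x 0 = 0 := congrArg Complex.re h
    have h1 : x 1 = 0 := congrArg Complex.im h
    ext i
    fin_cases i <;> simpa
  have habs : ‖z‖ = ‖x‖ := by
    rw [Complex.norm_def, Complex.normSq_apply, EuclideanSpace.norm_eq, Fin.sum_univ_two]
    simp [hz, sq]
  refine ⟨Complex.arg z, ?_, ?_⟩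
  · have := Complex.cos_arg hz0
    rw [habs] at this
    have hn : ‖x‖ ≠ 0 := by simpa using hx
    field_simp [hz] at this ⊢
    linarith [this]
  · have := Complex.sin_arg z
    rw [habs] at this
    have hn : ‖x‖ ≠ 0 := by simpa using hx
    field_simp [hz] at this ⊢
    linarith [this]

lemma sin_sub_bound {a b ε : ℝ} (ha : |Real.cos a| < ε) (hb : |Real.cos b| < ε) :
    |Real.sin (b - a)| < 2 * ε := by
  have h : Real.sin (b - a) = Real.sin b * Real.cos a - Real.cos b * Real.sin a :=
    Real.sin_sub b a
  calc |Real.sin (b - a)| ≤ |Real.sin b * Real.cos a| + |Real.cos b * Real.sin a| := by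
        rw [h]; exact abs_sub _ _
    _ ≤ |Real.cos a| + |Real.cos b| := by
        rw [abs_mul, abs_mul]
        have := Real.abs_sin_le_one a
        have := Real.abs_sin_le_one b
        nlinarith [abs_nonneg (Real.cos a), abs_nonneg (Real.cos b)]
    _ < 2 * ε := by linarith

/-- Jordan-type lower bound for sin on the grid. -/
lemma sin_grid_lb {N : ℕ} (hN : 6 ≤ N) {m : ℕ} (hm1 : 1 ≤ m) (hm2 : 2 * m ≤ N - 2) :
    4 / (N : ℝ) ≤ Real.sin (2 * Real.pi * m / N) := by
  have hNpos : (0:ℝ) < N := by positivity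
  have hx : (0:ℝ) ≤ 2 * Real.pi * m / N := by positivity
  have hm2' : (2:ℝ) * m ≤ (N:ℝ) - 2 := by
    have : (2 * m : ℕ) ≤ N - 2 := hm2
    have h2 : ((2*m:ℕ):ℝ) ≤ ((N-2:ℕ):ℝ) := Nat.cast_le.mpr this
    push_cast [Nat.cast_sub (by omega : 2 ≤ N)] at h2
    linarith
  have hδ : 2 * Real.pi / N ≤ 2 * Real.pi * m / N := by
    have : (1:ℝ) ≤ m := by exact_mod_cast hm1
    apply div_le_div_of_nonneg_right ?_ hNpos.le
    nlinarith [Real.pi_pos]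
  have hup : 2 * Real.pi * m / N ≤ Real.pi - 2 * Real.pi / N := by
    rw [div_le_iff₀ hNpos, sub_mul, div_mul_cancel₀ _ hNpos.ne']
    nlinarith [Real.pi_pos]
  rcases le_or_gt (2 * Real.pi * m / N) (Real.pi / 2) with h | h
  · have := Real.mul_le_sin hx h
    calc 4 / (N:ℝ) = 2 / Real.pi * (2 * Real.pi / N) := by
          field_simp; ring
      _ ≤ 2 / Real.pi * (2 * Real.pi * m / N) := by
          apply mul_le_mul_of_nonneg_left hδ
          positivity
      _ ≤ Real.sin (2 * Real.pi * m / N) := this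
  · have hkey : Real.sin (2 * Real.pi * m / N) = Real.sin (Real.pi - 2 * Real.pi * m / N) :=
      (Real.sin_pi_sub _).symm
    rw [hkey]
    have h1 : (0:ℝ) ≤ Real.pi - 2 * Real.pi * m / N := by
      have := Real.pi_pos
      have : 2 * Real.pi / N > 0 := by positivity
      linarith
    have h2 : Real.pi - 2 * Real.pi * m / N ≤ Real.pi / 2 := by linarith
    have := Real.mul_le_sin h1 h2
    calc 4 / (N:ℝ) = 2 / Real.pi * (2 * Real.pi / N) := by
          field_simp; ring
      _ ≤ 2 / Real.pi * (Real.pi - 2 * Real.pi * m / N) := by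
          apply mul_le_mul_of_nonneg_left (by linarith)
          positivity
      _ ≤ _ := this

lemma two_mul_card_lt_pairs (n : ℕ) :
    2 * (Finset.univ.filter fun pr : Fin n × Fin n => pr.1 < pr.2).card = n * n - n := by
  classical
  have hcard : (Finset.univ.filter fun pr : Fin n × Fin n => pr.1 < pr.2).card
      = (Finset.univ.filter fun pr : Fin n × Fin n => pr.2 < pr.1).card := by
    refine Finset.card_nbij' (fun p => (p.2, p.1)) (fun p => (p.2, p.1)) ?_ ?_ ?_ ?_ <;>
      simp [Finset.mem_filter, Set.MapsTo, Set.LeftInvOn, Set.RightInvOn]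
  have hdisj : Disjoint (Finset.univ.filter fun pr : Fin n × Fin n => pr.1 < pr.2)
      (Finset.univ.filter fun pr : Fin n × Fin n => pr.2 < pr.1) := by
    rw [Finset.disjoint_filter]
    intro x _ h1
    exact not_lt.mpr h1.le
  have hunion : (Finset.univ.filter fun pr : Fin n × Fin n => pr.1 < pr.2)
      ∪ (Finset.univ.filter fun pr : Fin n × Fin n => pr.2 < pr.1)
      = Finset.univ.filter fun pr : Fin n × Fin n => pr.1 ≠ pr.2 := by
    ext p
    simp only [Finset.mem_union, Finset.mem_filter, Finset.mem_univ, true_and,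
      ne_iff_lt_or_gt]
  have hoff : (Finset.univ.filter fun pr : Fin n × Fin n => pr.1 ≠ pr.2).card = n * n - n := by
    have h2 : (Finset.univ.filter fun pr : Fin n × Fin n => pr.1 ≠ pr.2) =
        (Finset.univ : Finset (Fin n)).offDiag := by
      ext p
      simp [Finset.mem_offDiag]
    rw [h2, Finset.offDiag_card]
    simp
  have hu := Finset.card_union_of_disjoint hdisj
  rw [hunion, hoff] at hu
  omega

/-- Lemma 4.4: existence of a separating projection direction in the plane. -/
theorem separating_projection_direction_in_plane
    (n : ℕ) (hn : 2 ≤ n)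
    (w : Fin n → EuclideanSpace ℝ (Fin 2)) (dmin : ℝ)
    -- `dmin` is the minimum separation of the `w_j`
    (hdminle : ∀ p j, p ≠ j → dmin ≤ ‖w p - w j‖)
    (hdmineq : ∃ p j, p ≠ j ∧ ‖w p - w j‖ = dmin) :
    ∃ q : ℕ, 1 ≤ q ∧ 2 * q ≤ n * (n + 1) ∧
      ∀ p j, p ≠ j →
        2 * dmin / ((n : ℝ) * ((n : ℝ) + 1)) ≤
          ‖(Submodule.orthogonalProjection
              (Submodule.span ℝ {dirVec (2 * Real.pi * (q : ℝ) / ((n : ℝ) * ((n : ℝ) + 1)))})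
              (w p) :
            EuclideanSpace ℝ (Fin 2)) -
          (Submodule.orthogonalProjection
              (Submodule.span ℝ {dirVec (2 * Real.pi * (q : ℝ) / ((n : ℝ) * ((n : ℝ) + 1)))})
              (w j) :
            EuclideanSpace ℝ (Fin 2))‖ := by
  classical
  set N := n * (n + 1) with hNdef
  have hNn : N = n * n + n := by rw [hNdef]; ring
  have hN6 : 6 ≤ N := by nlinarith
  have hdvd : 2 ∣ N := (Nat.even_mul_succ_self n).two_dvd
  have h2N : 2 * (N / 2) = N := Nat.mul_div_cancel' hdvd
  set Nr : ℝ := (n : ℝ) * ((n : ℝ) + 1) with hNrdef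
  have hNcast : ((N : ℕ) : ℝ) = Nr := by rw [hNdef, hNrdef]; push_cast; ring
  have hNrpos : (0 : ℝ) < Nr := by
    rw [← hNcast]
    exact_mod_cast Nat.pos_of_ne_zero (by omega)
  by_cases hd : dmin ≤ 0
  · refine ⟨1, le_refl 1, by omega, fun p j hpj => ?_⟩
    have h1 : 2 * dmin / Nr ≤ 0 := div_nonpos_of_nonpos_of_nonneg (by linarith) hNrpos.le
    exact h1.trans (norm_nonneg _)
  push_neg at hd
  by_contra hcon
  push_neg at hcon
  -- choose a bad ordered pair for each q in the range
  have key : ∀ q : ℕ, ∃ pr : Fin n × Fin n, q ∈ Finset.Icc 1 (N / 2) →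
      (pr.1 < pr.2 ∧
        ‖(Submodule.orthogonalProjection
            (Submodule.span ℝ {dirVec (2 * Real.pi * (q : ℝ) / Nr)}) (w pr.1) :
          EuclideanSpace ℝ (Fin 2)) -
        (Submodule.orthogonalProjection
            (Submodule.span ℝ {dirVec (2 * Real.pi * (q : ℝ) / Nr)}) (w pr.2) :
          EuclideanSpace ℝ (Fin 2))‖ < 2 * dmin / Nr) := by
    intro q
    by_cases hq : q ∈ Finset.Icc 1 (N / 2)
    · rw [Finset.mem_Icc] at hq
      obtain ⟨p, j, hpj, hlt⟩ := hcon q hq.1 (by omega)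
      rcases lt_or_gt_of_ne hpj with h | h
      · exact ⟨(p, j), fun _ => ⟨h, hlt⟩⟩
      · exact ⟨(j, p), fun _ => ⟨h, by rwa [norm_sub_rev]⟩⟩
    · exact ⟨(⟨0, by omega⟩, ⟨1, by omega⟩), fun h => absurd h hq⟩
  choose f hf using key
  have hcardIcc : (Finset.Icc 1 (N / 2)).card = N / 2 := by
    rw [Nat.card_Icc]; omega
  have hcards : (Finset.univ.filter fun pr : Fin n × Fin n => pr.1 < pr.2).card
      < (Finset.Icc 1 (N / 2)).card := by
    have h1 := two_mul_card_lt_pairs n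
    rw [hcardIcc]
    omega
  obtain ⟨q, hq, q', hq', hne, hfeq⟩ :=
    Finset.exists_ne_map_eq_of_card_lt_of_maps_to hcards
      (fun q hq => Finset.mem_filter.mpr ⟨Finset.mem_univ _, (hf q hq).1⟩)
  -- symmetric claim for q < q'
  have claim : ∀ a b : ℕ, a ∈ Finset.Icc 1 (N / 2) → b ∈ Finset.Icc 1 (N / 2) →
      a < b → f a = f b → False := by
    intro a b ha hb hab hfe
    obtain ⟨h1lt, h1⟩ := hf a ha
    obtain ⟨h2lt, h2⟩ := hf b hb
    rw [← hfe] at h2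
    set p := (f a).1
    set j := (f a).2
    have hpj : p ≠ j := ne_of_lt h1lt
    set x : EuclideanSpace ℝ (Fin 2) := w p - w j with hxdef
    have hx1 : dmin ≤ ‖x‖ := hdminle p j hpj
    have hxpos : 0 < ‖x‖ := lt_of_lt_of_le hd hx1
    have hxne : x ≠ 0 := by
      intro h0; rw [h0, norm_zero] at hxpos; exact lt_irrefl 0 hxpos
    obtain ⟨φ, hφ0, hφ1⟩ := exists_angle x hxne
    have hx0 : x 0 = w p 0 - w j 0 := rfl
    have hx1' : x 1 = w p 1 - w j 1 := rfl
    have habs : ∀ θ : ℝ, Real.cos θ * (w p 0 - w j 0) + Real.sin θ * (w p 1 - w j 1)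
        = ‖x‖ * Real.cos (θ - φ) := by
      intro θ
      rw [← hx0, ← hx1', hφ0, hφ1, Real.cos_sub]
      ring
    -- bound the cosines
    have hcos : ∀ c : ℕ, ‖(Submodule.orthogonalProjection
          (Submodule.span ℝ {dirVec (2 * Real.pi * (c : ℝ) / Nr)}) (w p) :
          EuclideanSpace ℝ (Fin 2)) -
        (Submodule.orthogonalProjection
          (Submodule.span ℝ {dirVec (2 * Real.pi * (c : ℝ) / Nr)}) (w j) :
          EuclideanSpace ℝ (Fin 2))‖ < 2 * dmin / Nr →
        |Real.cos (2 * Real.pi * (c : ℝ) / Nr - φ)| < 2 / Nr := by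
      intro c hc
      rw [proj_diff, habs, abs_mul, abs_of_pos hxpos] at hc
      have hle : 2 * dmin / Nr ≤ 2 * ‖x‖ / Nr := by gcongr
      have h3 : ‖x‖ * |Real.cos (2 * Real.pi * (c : ℝ) / Nr - φ)| < ‖x‖ * (2 / Nr) := by
        calc ‖x‖ * |Real.cos (2 * Real.pi * (c : ℝ) / Nr - φ)| < 2 * dmin / Nr := hc
          _ ≤ 2 * ‖x‖ / Nr := hle
          _ = ‖x‖ * (2 / Nr) := by ring
      exact lt_of_mul_lt_mul_left h3 hxpos.le
    have hca := hcos a h1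
    have hcb := hcos b h2
    have hsin := sin_sub_bound hca hcb
    have harg : (2 * Real.pi * (b : ℝ) / Nr - φ) - (2 * Real.pi * (a : ℝ) / Nr - φ)
        = 2 * Real.pi * ((b - a : ℕ) : ℝ) / Nr := by
      rw [Nat.cast_sub hab.le]
      field_simp
      ring
    rw [harg] at hsin
    rw [Finset.mem_Icc] at ha hb
    have hgrid := sin_grid_lb hN6 (m := b - a) (by omega) (by omega)
    rw [hNcast] at hgrid
    have habs2 := le_abs_self (Real.sin (2 * Real.pi * ((b - a : ℕ) : ℝ) / Nr))
    have h4 : (4 : ℝ) / Nr = 2 * (2 / Nr) := by ring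
    linarith
  rcases hne.lt_or_gt with h | h
  · exact claim q q' hq hq' h hfeq
  · exact claim q' q hq' hq h hfeq.symm
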